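/- Let α, β ∈ ℂ and let V = ℂL ⊕ ℂW be the Gel'fand–Dorfman bialgebra with Novikov product L∘L = L, L∘W = (α−1)W, W∘L = W, W∘W = 0, and Lie bracket [L,L] = [W,W] = 0, [W,L] = βW = −[L,W]. Assume that either α ∉ {0,1,2}, or (α = 1 and β ≠ 0), or (α = 2 and β ≠ 0). Then bilinear forms α_0, α_1, α_2, α_3 : V×V → ℂ satisfy the identities (I1)–(I8) if and only if there exist A, B, C ∈ ℂ such that α_3(L,L) = A, α_1(L,L) = B, α_1(L,W) = α_1(W,L) = C, α_0(L,W) = −α_0(W,L) = (β/α)·C, and α_3(L,W) = α_3(W,L) = α_3(W,W) = 0, α_2 = 0, α_1(W,W) = 0, α_0(L,L) = α_0(W,W) = 0. -/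

import Mathlib

/-- The Novikov product on `V = ℂL ⊕ ℂW ≅ ℂ × ℂ` (first coordinate = coefficient of
`L`, second = coefficient of `W`) determined by
`L∘L = L`, `L∘W = (α−1)W`, `W∘L = W`, `W∘W = 0`. -/
def circR (α : ℂ) (u v : ℂ × ℂ) : ℂ × ℂ :=
  (u.1 * v.1, (α - 1) * u.1 * v.2 + u.2 * v.1)

/-- The Lie bracket on `V = ℂL ⊕ ℂW ≅ ℂ × ℂ` determined by
`[L,L] = [W,W] = 0`, `[W,L] = βW = −[L,W]`. -/
def brR (β : ℂ) (u v : ℂ × ℂ) : ℂ × ℂ :=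
  (0, β * (u.2 * v.1 - u.1 * v.2))

/-- `L = (1,0)`. -/
def Lgen : ℂ × ℂ := (1, 0)

/-- `W = (0,1)`. -/
def Wgen : ℂ × ℂ := (0, 1)

/-- A bilinear form on `ℂ × ℂ` is determined by its values on the basis. -/
lemma bil_eq (f : (ℂ × ℂ) →ₗ[ℂ] (ℂ × ℂ) →ₗ[ℂ] ℂ) {w x y z : ℂ}
    (h1 : f Lgen Lgen = w) (h2 : f Lgen Wgen = x) (h3 : f Wgen Lgen = y)
    (h4 : f Wgen Wgen = z) (a b : ℂ × ℂ) :
    f a b = a.1 * b.1 * w + a.1 * b.2 * x + a.2 * b.1 * y + a.2 * b.2 * z := by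
  have ha : a = a.1 • Lgen + a.2 • Wgen := by ext <;> simp [Lgen, Wgen]
  have hb : b = b.1 • Lgen + b.2 • Wgen := by ext <;> simp [Lgen, Wgen]
  rw [← h1, ← h2, ← h3, ← h4]
  conv_lhs => rw [ha, hb]
  simp only [map_add, map_smul, LinearMap.add_apply, LinearMap.smul_apply, smul_eq_mul]
  ring

lemma kill {t u : ℂ} (hu : u ≠ 0) (h : u * t = 0) : t = 0 :=
  (mul_eq_zero.mp h).resolve_left hu

/-- For the two-dimensional Gel'fand–Dorfman bialgebra
`V = ℂL ⊕ ℂW` with `L∘L = L`, `L∘W = (α−1)W`, `W∘L = W`, `W∘W = 0`,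
`[W,L] = βW = −[L,W]`, and assuming `α ∉ {0,1,2}`, or `α = 1, β ≠ 0`, or
`α = 2, β ≠ 0`: bilinear forms `α_0, α_1, α_2, α_3` satisfy (I1)–(I8) if and only if
there are `A, B, C ∈ ℂ` with `α_3(L,L) = A`, `α_1(L,L) = B`,
`α_1(L,W) = α_1(W,L) = C`, `α_0(L,W) = −α_0(W,L) = (β/α)C`, and all the remaining
values vanish. -/
theorem stmt_15 (α β : ℂ)
    (hcase : (α ≠ 0 ∧ α ≠ 1 ∧ α ≠ 2) ∨ (α = 1 ∧ β ≠ 0) ∨ (α = 2 ∧ β ≠ 0))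
    (α0 α1 α2 α3 : (ℂ × ℂ) →ₗ[ℂ] (ℂ × ℂ) →ₗ[ℂ] ℂ) :
    -- the identities (I1)–(I8) ...
    ((∀ a b : ℂ × ℂ, α0 a b = - α0 b a)
      ∧ (∀ a b : ℂ × ℂ, α1 a b = α1 b a)
      ∧ (∀ a b : ℂ × ℂ, α2 a b = - α2 b a)
      ∧ (∀ a b : ℂ × ℂ, α3 a b = α3 b a)
      -- (I2)
      ∧ (∀ a b c : ℂ × ℂ, α3 a (circR α c b) = α3 (circR α a b) c
          ∧ α3 (circR α a b) c = α3 (circR α b a) c)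
      -- (I3)
      ∧ (∀ a b c : ℂ × ℂ, α2 a (circR α c b) + α3 a (brR β c b)
          = α2 (circR α a b) c + α3 (brR β b a) c)
      -- (I4)
      ∧ (∀ a b c : ℂ × ℂ, α2 a (circR α b c + circR α c b) + α2 (circR α b a) c
          = 2 * α2 (circR α a b) c + 3 * α3 (brR β b a) c)
      -- (I5)
      ∧ (∀ a b c : ℂ × ℂ, α1 a (circR α c b) + α2 a (brR β c b)
          = α1 (circR α a b) c + α2 (brR β b a) c)
      -- (I6)
      ∧ (∀ a b c : ℂ × ℂ, α1 a (circR α b c + circR α c b) - α1 b (circR α a c + circR α c a)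
          = - α1 (circR α b a) c + α1 (circR α a b) c + 2 * α2 (brR β b a) c)
      -- (I7)
      ∧ (∀ a b c : ℂ × ℂ, α0 a (circR α c b) + α1 a (brR β c b) - α0 b (circR α a c + circR α c a)
          = α0 (circR α a b) c + α1 (brR β b a) c)
      -- (I8)
      ∧ (∀ a b c : ℂ × ℂ, α0 a (brR β c b) - α0 b (brR β c a) = α0 (brR β b a) c))
    -- ... hold if and only if:
    ↔ (∃ A B C : ℂ,
        α3 Lgen Lgen = A ∧ α1 Lgen Lgen = B
          ∧ α1 Lgen Wgen = C ∧ α1 Wgen Lgen = C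
          ∧ α0 Lgen Wgen = β / α * C ∧ α0 Wgen Lgen = -(β / α * C)
          ∧ α3 Lgen Wgen = 0 ∧ α3 Wgen Lgen = 0 ∧ α3 Wgen Wgen = 0
          ∧ (∀ u v : ℂ × ℂ, α2 u v = 0)
          ∧ α1 Wgen Wgen = 0
          ∧ α0 Lgen Lgen = 0 ∧ α0 Wgen Wgen = 0) := by
  have hcase' : α ≠ 0 ∧ (α ≠ 1 ∨ β ≠ 0) ∧ (α ≠ 2 ∨ β ≠ 0) := by
    rcases hcase with ⟨h0, h1, h2⟩ | ⟨h1, hb⟩ | ⟨h2, hb⟩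
    · exact ⟨h0, Or.inl h1, Or.inl h2⟩
    · subst h1; exact ⟨one_ne_zero, Or.inr hb, Or.inl (by norm_num)⟩
    · subst h2; exact ⟨two_ne_zero, Or.inl (by norm_num), Or.inr hb⟩
  obtain ⟨hα0, hc1, hc2⟩ := hcase'
  constructor
  · rintro ⟨h0, h1, h2, h3, hI2, hI3, hI4, hI5, hI6, hI7, hI8⟩
    obtain ⟨w3, x3, y3, z3, e3a, e3b, e3c, e3d⟩ :
        ∃ w x y z, α3 Lgen Lgen = w ∧ α3 Lgen Wgen = x ∧ α3 Wgen Lgen = y ∧ α3 Wgen Wgen = z :=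
      ⟨_, _, _, _, rfl, rfl, rfl, rfl⟩
    obtain ⟨w2, x2, y2, z2, e2a, e2b, e2c, e2d⟩ :
        ∃ w x y z, α2 Lgen Lgen = w ∧ α2 Lgen Wgen = x ∧ α2 Wgen Lgen = y ∧ α2 Wgen Wgen = z :=
      ⟨_, _, _, _, rfl, rfl, rfl, rfl⟩
    obtain ⟨w1, x1, y1, z1, e1a, e1b, e1c, e1d⟩ :
        ∃ w x y z, α1 Lgen Lgen = w ∧ α1 Lgen Wgen = x ∧ α1 Wgen Lgen = y ∧ α1 Wgen Wgen = z :=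
      ⟨_, _, _, _, rfl, rfl, rfl, rfl⟩
    obtain ⟨w0, x0, y0, z0, e0a, e0b, e0c, e0d⟩ :
        ∃ w x y z, α0 Lgen Lgen = w ∧ α0 Lgen Wgen = x ∧ α0 Wgen Lgen = y ∧ α0 Wgen Wgen = z :=
      ⟨_, _, _, _, rfl, rfl, rfl, rfl⟩
    have H3 := bil_eq α3 e3a e3b e3c e3d
    have H2 := bil_eq α2 e2a e2b e2c e2d
    have H1 := bil_eq α1 e1a e1b e1c e1d
    have H0 := bil_eq α0 e0a e0b e0c e0d
    -- symmetry facts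
    have hw0 : w0 = 0 := by have t := h0 Lgen Lgen; rw [e0a] at t; linear_combination t / 2
    have hz0 : z0 = 0 := by have t := h0 Wgen Wgen; rw [e0d] at t; linear_combination t / 2
    have hy0 : y0 = -x0 := by have t := h0 Wgen Lgen; rw [e0c, e0b] at t; linear_combination t
    have hw2 : w2 = 0 := by have t := h2 Lgen Lgen; rw [e2a] at t; linear_combination t / 2
    have hz2 : z2 = 0 := by have t := h2 Wgen Wgen; rw [e2d] at t; linear_combination t / 2
    have hy2 : y2 = -x2 := by have t := h2 Wgen Lgen; rw [e2c, e2b] at t; linear_combination t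
    have hy1 : y1 = x1 := by have t := h1 Wgen Lgen; rw [e1c, e1b] at t; exact t
    have hy3 : y3 = x3 := by have t := h3 Wgen Lgen; rw [e3c, e3b] at t; exact t
    -- key scalar equations
    have E1 := (hI2 Lgen Wgen Lgen).2
    have E2 := hI3 Lgen Lgen Wgen
    have E3 := (hI2 Wgen Wgen Lgen).1
    have E4 := (hI2 Wgen Lgen Wgen).2
    have E5 := hI4 Lgen Lgen Wgen
    have E6 := hI5 Lgen Lgen Wgen
    have E7 := hI5 Lgen Wgen Wgen
    have E8 := hI7 Lgen Wgen Wgen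
    have E9 := hI7 Lgen Wgen Lgen
    simp only [H0, H1, H2, H3, circR, brR, Lgen, Wgen, Prod.fst_add, Prod.snd_add]
      at E1 E2 E3 E4 E5 E6 E7 E8 E9
    have hx3 : x3 = 0 := by
      rcases hc2 with h | h
      · exact kill (sub_ne_zero.mpr h) (by linear_combination E1 - (α - 2) * hy3)
      · exact kill h (by linear_combination E2)
    have hz3 : z3 = 0 := by linear_combination E3 + E4
    have hx2 : x2 = 0 := by
      rcases hc1 with h | h
      · exact kill (sub_ne_zero.mpr h) (by linear_combination E5)
      · exact kill h (by linear_combination E6)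
    have hz1 : z1 = 0 := by
      rcases hc1 with h | h
      · exact kill (sub_ne_zero.mpr h) (by linear_combination -E7 - β * hz2)
      · exact kill h (by linear_combination -E8 - (2 * α - 1) * hz0)
    have hx0 : α * x0 = β * x1 := by
      linear_combination E9 / 2 + ((α + 1) / 2) * hy0 + (β / 2) * hy1
    refine ⟨w3, w1, x1, e3a, e1a, e1b, ?_, ?_, ?_, ?_, ?_, ?_, ?_, ?_, ?_, ?_⟩
    · rw [e1c, hy1]
    · rw [e0b]; field_simp; linear_combination hx0
    · rw [e0c, hy0]; field_simp; linear_combination -hx0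
    · rw [e3b, hx3]
    · rw [e3c, hy3, hx3]
    · rw [e3d, hz3]
    · intro u v
      rw [bil_eq α2 (by rw [e2a, hw2]) (by rw [e2b, hx2]) (by rw [e2c, hy2, hx2])
        (by rw [e2d, hz2]) u v]
      ring
    · rw [e1d, hz1]
    · rw [e0a, hw0]
    · rw [e0d, hz0]
  · rintro ⟨A, B, C, hA3, hB1, hC1, hC2, h0LW, h0WL, h3LW, h3WL, h3WW, h2all, h1WW, h0LL, h0WW⟩
    have H3 := bil_eq α3 hA3 h3LW h3WL h3WW
    have H2 := bil_eq α2 (h2all _ _) (h2all _ _) (h2all _ _) (h2all _ _)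
    have H1 := bil_eq α1 hB1 hC1 hC2 h1WW
    have H0 := bil_eq α0 h0LL h0LW h0WL h0WW
    have key : α * (β / α * C) = β * C := by field_simp
    refine ⟨?_, ?_, ?_, ?_, ?_, ?_, ?_, ?_, ?_, ?_, ?_⟩
    · intro a b; simp only [H0]; ring
    · intro a b; simp only [H1]; ring
    · intro a b; simp only [H2]; ring
    · intro a b; simp only [H3]; ring
    · intro a b c
      constructor <;> (simp only [H3, circR, brR, Prod.fst_add, Prod.snd_add]; ring)
    · intro a b c; simp only [H2, H3, circR, brR, Prod.fst_add, Prod.snd_add]; ring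
    · intro a b c; simp only [H2, H3, circR, brR, Prod.fst_add, Prod.snd_add]; ring
    · intro a b c; simp only [H1, H2, circR, brR, Prod.fst_add, Prod.snd_add]; ring
    · intro a b c; simp only [H1, H2, circR, brR, Prod.fst_add, Prod.snd_add]; ring
    · intro a b c; simp only [H0, H1, circR, brR, Prod.fst_add, Prod.snd_add]
      linear_combination (2 * a.1 * b.2 * c.1 - a.1 * b.1 * c.2 - a.2 * b.1 * c.1) * key
    · intro a b c; simp only [H0, circR, brR, Prod.fst_add, Prod.snd_add]; ring
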